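/- (Theorem 1.1, part B, first case of (1.11).) Assume V_i ≥ 0 for all i ≥ 1, V_1 > 0, and H(u) < ∞ for all u ∈ [0, u_0) with u_0 > 0. Then for every sequence (x_k)_{k≥1} of positive reals with x_k/k → ∞ as k → ∞, one has ( M_k(x_k) )^{1/k} / ( x_k·V_1 ) → 1 as k → ∞. -/

import Mathlib

open scoped BigOperators ENNReal
open Filter MeasureTheory
open Topology

noncomputable section

/-- The finset of tuples `(l 0, ..., l (k-1))` (representing `l_1, ..., l_k`) of nonnegative
integers with `l_1 + 2 l_2 + ⋯ + k l_k = k`. -/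
def bellTuples (k : ℕ) : Finset (Fin k → ℕ) :=
  (Fintype.piFinset fun _ => Finset.range (k + 1)).filter
    (fun l => ∑ i, (i.1 + 1) * l i = k)

/-- Weighted Bell polynomial `M_k(x)` for weights `V_1, V_2, …`. -/
def weightedBell (V : ℕ → ℝ) (k : ℕ) (x : ℝ) : ℝ :=
  (Nat.factorial k : ℝ) * ∑ l ∈ bellTuples k, ∏ i : Fin k,
    (x * V (i.1 + 1)) ^ (l i) /
      ((Nat.factorial (i.1 + 1) : ℝ) ^ (l i) * (Nat.factorial (l i) : ℝ))

/-- Exponential generating function `H(u) = 1 + ∑_{i ≥ 1} V_i u^i / i!` of the weights. -/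
def weightEGF (V : ℕ → ℝ) (u : ℝ) : ℝ :=
  1 + ∑' i : ℕ, V (i + 1) * u ^ (i + 1) / (Nat.factorial (i + 1) : ℝ)

/-- Termwise derivative `H'(u) = ∑_{i ≥ 1} V_i u^{i-1}/(i-1)!`. -/
def weightEGFDeriv (V : ℕ → ℝ) (u : ℝ) : ℝ :=
  ∑' i : ℕ, V (i + 1) * u ^ i / (Nat.factorial i : ℝ)

/-- Termwise second derivative `H''(u)`. -/
def weightEGFDeriv2 (V : ℕ → ℝ) (u : ℝ) : ℝ :=
  ∑' i : ℕ, V (i + 2) * u ^ i / (Nat.factorial i : ℝ)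

/-- `H(u) < ∞` for all `u ∈ [0, u_0)`. -/
def HFinite (V : ℕ → ℝ) (u0 : ℝ≥0∞) : Prop :=
  ∀ u : ℝ, 0 ≤ u → ENNReal.ofReal u < u0 →
    Summable (fun i : ℕ => V (i + 1) * u ^ (i + 1) / (Nat.factorial (i + 1) : ℝ))

-- term nonnegativity
lemma term_nonneg (V : ℕ → ℝ) (hV : ∀ i : ℕ, 1 ≤ i → 0 ≤ V i) (x : ℝ) (hx : 0 ≤ x)
    (k : ℕ) (l : Fin k → ℕ) :
    0 ≤ ∏ i : Fin k, (x * V (i.1 + 1)) ^ (l i) /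
      ((Nat.factorial (i.1 + 1) : ℝ) ^ (l i) * (Nat.factorial (l i) : ℝ)) := by
  apply Finset.prod_nonneg
  intro i _
  apply div_nonneg
  · exact pow_nonneg (mul_nonneg hx (hV _ (Nat.le_add_left 1 i.1))) _
  · positivity

-- lower bound
lemma le_weightedBell (V : ℕ → ℝ) (hV : ∀ i : ℕ, 1 ≤ i → 0 ≤ V i) (x : ℝ) (hx : 0 ≤ x)
    (k : ℕ) (hk : 1 ≤ k) : (x * V 1) ^ k ≤ weightedBell V k x := by
  set i₀ : Fin k := ⟨0, hk⟩ with hi₀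
  set l₀ : Fin k → ℕ := fun i => if i = i₀ then k else 0 with hl₀
  have hmem : l₀ ∈ bellTuples k := by
    simp only [bellTuples, Finset.mem_filter, Fintype.mem_piFinset, Finset.mem_range]
    constructor
    · intro i
      by_cases h : i = i₀ <;> simp [l₀, h] <;> omega
    · have : ∀ i : Fin k, (i.1 + 1) * l₀ i = if i = i₀ then k else 0 := by
        intro i
        by_cases h : i = i₀ <;> simp [l₀, h] <;> simp [hi₀]
      rw [Finset.sum_congr rfl (fun i _ => this i), Finset.sum_ite_eq' Finset.univ i₀]
      simp
  have hterm : (∏ i : Fin k, (x * V (i.1 + 1)) ^ (l₀ i) /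
      ((Nat.factorial (i.1 + 1) : ℝ) ^ (l₀ i) * (Nat.factorial (l₀ i) : ℝ)))
      = (x * V 1) ^ k / (Nat.factorial k : ℝ) := by
    have : ∀ i : Fin k, (x * V (i.1 + 1)) ^ (l₀ i) /
        ((Nat.factorial (i.1 + 1) : ℝ) ^ (l₀ i) * (Nat.factorial (l₀ i) : ℝ))
        = if i = i₀ then (x * V 1) ^ k / (Nat.factorial k : ℝ) else 1 := by
      intro i
      by_cases h : i = i₀
      · simp [l₀, h, hi₀, Nat.factorial]
      · simp [l₀, h]
    rw [Finset.prod_congr rfl (fun i _ => this i), Finset.prod_ite_eq' Finset.univ i₀]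
    simp
  have hle : (x * V 1) ^ k / (Nat.factorial k : ℝ) ≤
      ∑ l ∈ bellTuples k, ∏ i : Fin k, (x * V (i.1 + 1)) ^ (l i) /
        ((Nat.factorial (i.1 + 1) : ℝ) ^ (l i) * (Nat.factorial (l i) : ℝ)) := by
    rw [← hterm]
    exact Finset.single_le_sum (fun l _ => term_nonneg V hV x hx k l) hmem
  have hfac : (0:ℝ) < (Nat.factorial k : ℝ) := by positivity
  calc (x * V 1) ^ k = (Nat.factorial k : ℝ) * ((x * V 1) ^ k / (Nat.factorial k : ℝ)) := by
        field_simp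
    _ ≤ weightedBell V k x := by
        unfold weightedBell
        exact mul_le_mul_of_nonneg_left hle hfac.le

lemma weightedBell_le (V : ℕ → ℝ) (hV : ∀ i : ℕ, 1 ≤ i → 0 ≤ V i) (x u : ℝ)
    (hx : 0 ≤ x) (hu : 0 < u)
    (hsum : Summable (fun i : ℕ => V (i + 1) * u ^ (i + 1) / (Nat.factorial (i + 1) : ℝ)))
    (k : ℕ) :
    weightedBell V k x ≤ (Nat.factorial k : ℝ) * u⁻¹ ^ k *
      Real.exp (x * ∑' i : ℕ, V (i + 1) * u ^ (i + 1) / (Nat.factorial (i + 1) : ℝ)) := by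
  set a : ℕ → ℝ := fun i => x * V (i + 1) * u ^ (i + 1) / (Nat.factorial (i + 1) : ℝ) with ha
  have ha_nonneg : ∀ i : ℕ, 0 ≤ a i := by
    intro i
    apply div_nonneg _ (by positivity)
    exact mul_nonneg (mul_nonneg hx (hV _ (Nat.le_add_left 1 i))) (by positivity)
  -- step 1: rewrite each bell term
  have hstep1 : ∀ l ∈ bellTuples k,
      (∏ i : Fin k, (x * V (i.1 + 1)) ^ (l i) /
        ((Nat.factorial (i.1 + 1) : ℝ) ^ (l i) * (Nat.factorial (l i) : ℝ)))
      = u⁻¹ ^ k * ∏ i : Fin k, (a i.1) ^ (l i) / (Nat.factorial (l i) : ℝ) := by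
    intro l hl
    have hlsum : ∑ i : Fin k, (i.1 + 1) * l i = k := by
      simpa [bellTuples] using (Finset.mem_filter.mp hl).2
    have hpt : ∀ i : Fin k, (a i.1) ^ (l i) / (Nat.factorial (l i) : ℝ)
        = ((x * V (i.1 + 1)) ^ (l i) /
            ((Nat.factorial (i.1 + 1) : ℝ) ^ (l i) * (Nat.factorial (l i) : ℝ)))
          * u ^ ((i.1 + 1) * l i) := by
      intro i
      have hfac : ((Nat.factorial (i.1 + 1) : ℝ)) ≠ 0 := by positivity
      have hlfac : ((Nat.factorial (l i) : ℝ)) ≠ 0 := by positivity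
      rw [ha]
      simp only []
      rw [div_pow, mul_pow, mul_pow, ← pow_mul]
      field_simp
    rw [Finset.prod_congr rfl (fun i _ => hpt i), Finset.prod_mul_distrib,
      Finset.prod_pow_eq_pow_sum, hlsum]
    field_simp
    rw [one_div, inv_pow, inv_mul_cancel_right₀ (pow_ne_zero _ hu.ne')]
  -- step 2: sum over bellTuples ≤ sum over piFinset
  have hstep2 : (∑ l ∈ bellTuples k, ∏ i : Fin k, (a i.1) ^ (l i) / (Nat.factorial (l i) : ℝ))
      ≤ ∑ l ∈ Fintype.piFinset (fun _ : Fin k => Finset.range (k + 1)),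
          ∏ i : Fin k, (a i.1) ^ (l i) / (Nat.factorial (l i) : ℝ) := by
    apply Finset.sum_le_sum_of_subset_of_nonneg (Finset.filter_subset _ _)
    intro l _ _
    apply Finset.prod_nonneg
    intro i _
    exact div_nonneg (pow_nonneg (ha_nonneg _) _) (by positivity)
  -- step 3: sum over piFinset = product of partial exp sums ≤ exp of sum
  have hstep3 : (∑ l ∈ Fintype.piFinset (fun _ : Fin k => Finset.range (k + 1)),
          ∏ i : Fin k, (a i.1) ^ (l i) / (Nat.factorial (l i) : ℝ))
      ≤ Real.exp (∑ i : Fin k, a i.1) := by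
    rw [← Finset.prod_univ_sum (fun _ : Fin k => Finset.range (k+1)) (fun i j => a i.1 ^ j / (Nat.factorial j : ℝ))]
    rw [Real.exp_sum]
    apply Finset.prod_le_prod
    · intro i _
      apply Finset.sum_nonneg
      intro j _
      exact div_nonneg (pow_nonneg (ha_nonneg _) _) (by positivity)
    · intro i _
      exact Real.sum_le_exp_of_nonneg (ha_nonneg i.1) (k + 1)
  -- step 4: partial sum of a ≤ x * tsum
  have hsum' : Summable a := by
    have := hsum.mul_left x
    apply this.congr
    intro i
    rw [ha]
    simp only []
    ring
  have hstep4 : (∑ i : Fin k, a i.1) ≤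
      x * ∑' i : ℕ, V (i + 1) * u ^ (i + 1) / (Nat.factorial (i + 1) : ℝ) := by
    have h1 : (∑ i : Fin k, a i.1) = ∑ i ∈ Finset.range k, a i := by
      rw [Finset.sum_range fun i => a i]
    rw [h1]
    have h2 : (∑' i : ℕ, a i) = x * ∑' i : ℕ, V (i + 1) * u ^ (i + 1) / (Nat.factorial (i + 1) : ℝ) := by
      rw [← tsum_mul_left]
      apply tsum_congr
      intro i
      rw [ha]; simp only []; ring
    rw [← h2]
    exact Summable.sum_le_tsum (Finset.range k) (fun i _ => ha_nonneg i) hsum'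
  calc weightedBell V k x
      = (Nat.factorial k : ℝ) * ∑ l ∈ bellTuples k, ∏ i : Fin k,
        (x * V (i.1 + 1)) ^ (l i) /
          ((Nat.factorial (i.1 + 1) : ℝ) ^ (l i) * (Nat.factorial (l i) : ℝ)) := rfl
    _ = (Nat.factorial k : ℝ) * (u⁻¹ ^ k *
          ∑ l ∈ bellTuples k, ∏ i : Fin k, (a i.1) ^ (l i) / (Nat.factorial (l i) : ℝ)) := by
        rw [Finset.sum_congr rfl hstep1, ← Finset.mul_sum]
    _ ≤ (Nat.factorial k : ℝ) * (u⁻¹ ^ k * Real.exp (x * ∑' i : ℕ,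
          V (i + 1) * u ^ (i + 1) / (Nat.factorial (i + 1) : ℝ))) := by
        apply mul_le_mul_of_nonneg_left _ (by positivity)
        apply mul_le_mul_of_nonneg_left _ (by positivity)
        exact le_trans (le_trans hstep2 hstep3) (Real.exp_le_exp.mpr hstep4)
    _ = _ := by ring

lemma exp_mul_pow_le (k : ℕ) (hk : 1 ≤ k) :
    Real.exp 1 * (k : ℝ) ^ (k + 1) ≤ ((k : ℝ) + 1) ^ (k + 1) := by
  have hk0 : (0 : ℝ) < k := by exact_mod_cast hk
  have ht : (0 : ℝ) < (k : ℝ) + 1 := by positivity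
  have htk : (k : ℝ) + 1 ≠ 0 := ht.ne'
  set t : ℝ := 1 / ((k : ℝ) + 1) with htdef
  have h2 : (k : ℝ) / ((k : ℝ) + 1) ≤ Real.exp (-t) := by
    have h3 := Real.add_one_le_exp (-t)
    have h4 : -t + 1 = (k : ℝ) / ((k : ℝ) + 1) := by
      rw [htdef]
      field_simp
      ring
    linarith
  have h1 : Real.exp t * k ≤ (k : ℝ) + 1 := by
    have h5 : Real.exp t * ((k : ℝ) / ((k : ℝ) + 1)) ≤ Real.exp t * Real.exp (-t) :=
      mul_le_mul_of_nonneg_left h2 (Real.exp_pos t).le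
    rw [← Real.exp_add] at h5
    simp at h5
    calc Real.exp t * k = Real.exp t * ((k : ℝ) / ((k : ℝ) + 1)) * ((k : ℝ) + 1) := by
          field_simp
      _ ≤ 1 * ((k : ℝ) + 1) := mul_le_mul_of_nonneg_right h5 ht.le
      _ = (k : ℝ) + 1 := one_mul _
  have h6 : (Real.exp t * k) ^ (k + 1) ≤ ((k : ℝ) + 1) ^ (k + 1) :=
    pow_le_pow_left₀ (by positivity) h1 _
  calc Real.exp 1 * (k : ℝ) ^ (k + 1) = (Real.exp t * k) ^ (k + 1) := by
        rw [mul_pow, ← Real.exp_nat_mul]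
        congr 2
        rw [htdef]
        field_simp
        norm_cast
    _ ≤ ((k : ℝ) + 1) ^ (k + 1) := h6

lemma fact_le_exp (k : ℕ) (hk : 1 ≤ k) :
    (Nat.factorial k : ℝ) * Real.exp k ≤ Real.exp 1 * (k : ℝ) ^ (k + 1) := by
  induction k, hk using Nat.le_induction with
  | base => simp [Nat.factorial]
  | succ n hn ih =>
    have h1 : ((Nat.factorial (n + 1) : ℝ)) = (n + 1 : ℝ) * (Nat.factorial n : ℝ) := by
      rw [Nat.factorial_succ]; push_cast; ring
    have h2 : Real.exp ((n : ℝ) + 1) = Real.exp n * Real.exp 1 := by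
      rw [← Real.exp_add]
    have hnn : (0 : ℝ) < (n : ℝ) + 1 := by positivity
    calc (Nat.factorial (n + 1) : ℝ) * Real.exp (↑(n + 1))
        = ((n : ℝ) + 1) * Real.exp 1 * ((Nat.factorial n : ℝ) * Real.exp n) := by
          push_cast [h1, h2]; ring
      _ ≤ ((n : ℝ) + 1) * Real.exp 1 * (Real.exp 1 * (n : ℝ) ^ (n + 1)) := by
          apply mul_le_mul_of_nonneg_left ih (by positivity)
      _ = ((n : ℝ) + 1) * (Real.exp 1 * (n : ℝ) ^ (n + 1)) * Real.exp 1 := by ring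
      _ ≤ ((n : ℝ) + 1) * ((n : ℝ) + 1) ^ (n + 1) * Real.exp 1 := by
          apply mul_le_mul_of_nonneg_right _ (Real.exp_pos 1).le
          exact mul_le_mul_of_nonneg_left (exp_mul_pow_le n hn) hnn.le
      _ = Real.exp 1 * ((n : ℝ) + 1) ^ (n + 1 + 1) := by ring
      _ = Real.exp 1 * (↑(n + 1) : ℝ) ^ (n + 1 + 1) := by push_cast; ring

section Aux

variable (V : ℕ → ℝ)

lemma aux_summable_of_le (hV : ∀ i : ℕ, 1 ≤ i → 0 ≤ V i) {u u1 : ℝ} (hu : 0 ≤ u) (huu : u ≤ u1)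
    (hsum1 : Summable (fun i : ℕ => V (i + 1) * u1 ^ (i + 1) / (Nat.factorial (i + 1) : ℝ))) :
    Summable (fun i : ℕ => V (i + 1) * u ^ (i + 1) / (Nat.factorial (i + 1) : ℝ)) := by
  apply Summable.of_nonneg_of_le _ _ hsum1
  · intro i
    have := hV (i + 1) (Nat.le_add_left 1 i)
    positivity
  · intro i
    have h1 := hV (i + 1) (Nat.le_add_left 1 i)
    gcongr

lemma aux_summable_shift {u1 : ℝ} (hu1 : 0 < u1)
    (hsum1 : Summable (fun i : ℕ => V (i + 1) * u1 ^ (i + 1) / (Nat.factorial (i + 1) : ℝ))) :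
    Summable (fun i : ℕ => V (i + 2) * u1 ^ i / (Nat.factorial (i + 2) : ℝ)) := by
  have hsum2 : Summable (fun i : ℕ => V (i + 1 + 1) * u1 ^ (i + 1 + 1) / (Nat.factorial (i + 1 + 1) : ℝ)) :=
    (summable_nat_add_iff 1).mpr hsum1
  have := hsum2.mul_right ((u1 ^ 2)⁻¹)
  apply this.congr
  intro i
  have hpow : u1 ^ (i + 1 + 1) = u1 ^ i * u1 ^ 2 := by ring
  have : (i + 1 + 1) = (i + 2) := by ring
  rw [this, hpow]
  field_simp

lemma aux_tsum_le (hV : ∀ i : ℕ, 1 ≤ i → 0 ≤ V i) {u u1 : ℝ} (hu : 0 ≤ u) (huu : u ≤ u1)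
    (hu1 : 0 < u1)
    (hsum1 : Summable (fun i : ℕ => V (i + 1) * u1 ^ (i + 1) / (Nat.factorial (i + 1) : ℝ))) :
    (∑' i : ℕ, V (i + 1) * u ^ (i + 1) / (Nat.factorial (i + 1) : ℝ)) ≤
      V 1 * u + (∑' i : ℕ, V (i + 2) * u1 ^ i / (Nat.factorial (i + 2) : ℝ)) * u ^ 2 := by
  have husum := aux_summable_of_le V hV hu huu hsum1
  have hC := aux_summable_shift V hu1 hsum1
  rw [Summable.tsum_eq_zero_add husum]
  have h0 : V (0 + 1) * u ^ (0 + 1) / (Nat.factorial (0 + 1) : ℝ) = V 1 * u := by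
    simp [Nat.factorial]
  rw [h0]
  gcongr V 1 * u + ?_
  have hshift : Summable (fun i : ℕ => V (i + 1 + 1) * u ^ (i + 1 + 1) / (Nat.factorial (i + 1 + 1) : ℝ)) :=
    (summable_nat_add_iff 1).mpr husum
  calc (∑' i : ℕ, V (i + 1 + 1) * u ^ (i + 1 + 1) / (Nat.factorial (i + 1 + 1) : ℝ))
      ≤ ∑' i : ℕ, (V (i + 2) * u1 ^ i / (Nat.factorial (i + 2) : ℝ)) * u ^ 2 := by
        apply Summable.tsum_le_tsum _ hshift (hC.mul_right (u ^ 2))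
        intro i
        have h1 := hV (i + 2) (by omega)
        have h2 : u ^ (i + 1 + 1) = u ^ i * u ^ 2 := by ring
        have h3 : (i + 1 + 1) = (i + 2) := by ring
        rw [h3, h2]
        have h4 : V (i + 2) * (u ^ i * u ^ 2) / (Nat.factorial (i + 2) : ℝ) =
            (V (i + 2) * u ^ i / (Nat.factorial (i + 2) : ℝ)) * u ^ 2 := by ring
        rw [h4]
        apply mul_le_mul_of_nonneg_right _ (by positivity : (0:ℝ) ≤ u ^ 2)
        gcongr
    _ = (∑' i : ℕ, V (i + 2) * u1 ^ i / (Nat.factorial (i + 2) : ℝ)) * u ^ 2 :=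
        tsum_mul_right

end Aux

/-- Theorem 1.1, part B, first case of (1.11): if `V_1 > 0` and
`x_k / k → ∞`, then `(M_k(x_k))^{1/k} / (x_k V_1) → 1`. -/
theorem stmt4 (V : ℕ → ℝ) (hVpos : ∀ i : ℕ, 1 ≤ i → 0 ≤ V i) (hV1 : 0 < V 1)
    (u0 : ℝ≥0∞) (hu0 : 0 < u0) (hH : HFinite V u0)
    (x : ℕ → ℝ) (hx : ∀ k, 0 < x k)
    (hxinf : Tendsto (fun k : ℕ => x k / (k : ℝ)) atTop atTop) :
    Tendsto (fun k : ℕ => (weightedBell V k (x k)) ^ ((k : ℝ)⁻¹) / (x k * V 1))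
      atTop (nhds 1) := by
  obtain ⟨u1, hu1pos, hu1lt⟩ : ∃ u1 : ℝ, 0 < u1 ∧ ENNReal.ofReal u1 < u0 := by
    rcases eq_or_ne u0 ⊤ with h | h
    · exact ⟨1, one_pos, by simp [h]⟩
    · have htr : 0 < u0.toReal := ENNReal.toReal_pos hu0.ne' h
      refine ⟨u0.toReal / 2, by linarith, ?_⟩
      rw [ENNReal.ofReal_lt_iff_lt_toReal (by positivity) h]
      linarith
  have hsum1 := hH u1 hu1pos.le hu1lt
  set C : ℝ := ∑' i : ℕ, V (i + 2) * u1 ^ i / (Nat.factorial (i + 2) : ℝ) with hCdef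
  -- k / x k → 0
  have hk0 : Tendsto (fun k : ℕ => (k : ℝ) / x k) atTop (𝓝 0) := by
    have h := hxinf.inv_tendsto_atTop
    apply h.congr
    intro k
    simp [Pi.inv_apply, inv_div]
  have hev : ∀ᶠ k : ℕ in atTop, 1 ≤ k ∧ (k : ℝ) / (x k * V 1) ≤ u1 := by
    have h2 : Tendsto (fun k : ℕ => (k : ℝ) / (x k * V 1)) atTop (𝓝 0) := by
      have h3 := hk0.div_const (V 1)
      simp only [zero_div] at h3
      apply h3.congr
      intro k
      rw [div_div]
    filter_upwards [eventually_ge_atTop 1, h2.eventually (eventually_le_nhds hu1pos)] with k hk1 hk2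
    exact ⟨hk1, hk2⟩
  set g : ℕ → ℝ := fun k => (Real.exp 1 * (k : ℝ)) ^ ((k : ℝ)⁻¹) *
      Real.exp (C / (V 1) ^ 2 * ((k : ℝ) / x k)) with hgdef
  -- g → 1
  have hA1 : Tendsto (fun k : ℕ => (Real.exp 1) ^ ((k : ℝ)⁻¹)) atTop (𝓝 1) := by
    have h := (Real.continuous_exp.tendsto 0).comp tendsto_inv_atTop_nhds_zero_nat
    rw [Real.exp_zero] at h
    apply h.congr
    intro k
    simp [Function.comp, Real.exp_one_rpow]
  have hA2 : Tendsto (fun k : ℕ => ((k : ℝ)) ^ ((k : ℝ)⁻¹)) atTop (𝓝 1) := by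
    have h := tendsto_rpow_div.comp (tendsto_natCast_atTop_atTop (R := ℝ))
    apply h.congr
    intro k
    simp [Function.comp, one_div]
  have hA : Tendsto (fun k : ℕ => (Real.exp 1 * (k : ℝ)) ^ ((k : ℝ)⁻¹)) atTop (𝓝 1) := by
    have h := hA1.mul hA2
    rw [one_mul] at h
    apply h.congr
    intro k
    rw [Real.mul_rpow (Real.exp_pos 1).le (Nat.cast_nonneg k)]
  have hB : Tendsto (fun k : ℕ => Real.exp (C / (V 1) ^ 2 * ((k : ℝ) / x k))) atTop (𝓝 1) := by
    have h := hk0.const_mul (C / (V 1) ^ 2)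
    rw [mul_zero] at h
    have h2 := (Real.continuous_exp.tendsto 0).comp h
    rw [Real.exp_zero] at h2
    exact h2
  have hgt : Tendsto g atTop (𝓝 1) := by
    have := hA.mul hB
    rw [one_mul] at this
    exact this
  apply tendsto_of_tendsto_of_tendsto_of_le_of_le' tendsto_const_nhds hgt
  · -- lower bound: 1 ≤ r_k
    filter_upwards [hev] with k hk
    obtain ⟨hk1, _⟩ := hk
    have hxv : 0 < x k * V 1 := mul_pos (hx k) hV1
    have hkR : ((k : ℝ)) ≠ 0 := by
      have : 0 < k := hk1
      positivity
    have hlow := le_weightedBell V hVpos (x k) (hx k).le k hk1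
    have h1 : x k * V 1 ≤ (weightedBell V k (x k)) ^ ((k : ℝ)⁻¹) := by
      calc x k * V 1 = ((x k * V 1) ^ k) ^ ((k : ℝ)⁻¹) := by
            rw [← Real.rpow_natCast (x k * V 1) k, ← Real.rpow_mul hxv.le,
              mul_inv_cancel₀ hkR, Real.rpow_one]
        _ ≤ _ := Real.rpow_le_rpow (by positivity) hlow (by positivity)
    exact (one_le_div hxv).mpr h1
  · -- upper bound: r_k ≤ g k
    filter_upwards [hev] with k hk
    obtain ⟨hk1, hku⟩ := hk
    have hxv : 0 < x k * V 1 := mul_pos (hx k) hV1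
    have hkR : (0 : ℝ) < (k : ℝ) := by exact_mod_cast hk1
    set u : ℝ := (k : ℝ) / (x k * V 1) with hudef
    have hupos : 0 < u := div_pos hkR hxv
    have husum := aux_summable_of_le V hVpos hupos.le hku hsum1
    have hM1 := weightedBell_le V hVpos (x k) u (hx k).le hupos husum k
    have hS := aux_tsum_le V hVpos hupos.le hku hu1pos hsum1
    set M : ℝ := weightedBell V k (x k) with hMdef
    have hMnn : 0 ≤ M := le_trans (by positivity) (le_weightedBell V hVpos (x k) (hx k).le k hk1)
    set t : ℝ := x k * (C * u ^ 2) with htdef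
    have harg : x k * (V 1 * u + C * u ^ 2) = (k : ℝ) + t := by
      rw [htdef, hudef]
      field_simp [(hx k).ne']
    have hM2 : M ≤ (Nat.factorial k : ℝ) * u⁻¹ ^ k * Real.exp ((k : ℝ) + t) := by
      refine le_trans hM1 ?_
      rw [← harg]
      apply mul_le_mul_of_nonneg_left _ (by positivity)
      exact Real.exp_le_exp.mpr (mul_le_mul_of_nonneg_left hS (hx k).le)
    have hcu : (k : ℝ) * u⁻¹ = x k * V 1 := by
      rw [hudef, inv_div]
      field_simp
    have hM3 : M ≤ Real.exp 1 * (k : ℝ) * (x k * V 1) ^ k * Real.exp t := by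
      calc M ≤ (Nat.factorial k : ℝ) * u⁻¹ ^ k * Real.exp ((k : ℝ) + t) := hM2
        _ = ((Nat.factorial k : ℝ) * Real.exp k) * (u⁻¹ ^ k * Real.exp t) := by
            rw [Real.exp_add]; ring
        _ ≤ (Real.exp 1 * (k : ℝ) ^ (k + 1)) * (u⁻¹ ^ k * Real.exp t) := by
            apply mul_le_mul_of_nonneg_right (fact_le_exp k hk1) (by positivity)
        _ = Real.exp 1 * (k : ℝ) * (((k : ℝ) * u⁻¹) ^ k) * Real.exp t := by
            rw [mul_pow, pow_succ]
            ring
        _ = Real.exp 1 * (k : ℝ) * (x k * V 1) ^ k * Real.exp t := by rw [hcu]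
    have hx0 : x k ≠ 0 := (hx k).ne'
    have hV0 : V 1 ≠ 0 := hV1.ne'
    have hts : t * (k : ℝ)⁻¹ = C / (V 1) ^ 2 * ((k : ℝ) / x k) := by
      rw [htdef, hudef]
      field_simp
    have hr : M ^ ((k : ℝ)⁻¹) ≤ (Real.exp 1 * (k : ℝ)) ^ ((k : ℝ)⁻¹) * (x k * V 1) *
        Real.exp (C / (V 1) ^ 2 * ((k : ℝ) / x k)) := by
      have h1 := Real.rpow_le_rpow hMnn hM3 (by positivity : (0:ℝ) ≤ (k : ℝ)⁻¹)
      refine le_trans h1 (le_of_eq ?_)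
      rw [Real.mul_rpow (by positivity) (Real.exp_pos t).le,
        Real.mul_rpow (by positivity) (by positivity : (0:ℝ) ≤ (x k * V 1) ^ k)]
      rw [← Real.rpow_natCast (x k * V 1) k, ← Real.rpow_mul hxv.le,
        mul_inv_cancel₀ hkR.ne', Real.rpow_one]
      rw [← Real.exp_mul, hts]
    rw [div_le_iff₀ hxv, hgdef]
    calc M ^ ((k : ℝ)⁻¹) ≤ (Real.exp 1 * (k : ℝ)) ^ ((k : ℝ)⁻¹) * (x k * V 1) *
          Real.exp (C / (V 1) ^ 2 * ((k : ℝ) / x k)) := hr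
      _ = (Real.exp 1 * (k : ℝ)) ^ ((k : ℝ)⁻¹) *
          Real.exp (C / (V 1) ^ 2 * ((k : ℝ) / x k)) * (x k * V 1) := by ring

end
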